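/- Let n ≥ 1, i ∈ {1,…,n}, and let S₁, S₂ ⊆ [0,1]^n be disjoint compact connected sets, each separating the i-th opposite faces of [0,1]^n. Then, in the cube extended in the i-th direction, one of the faces lies on the opposite side of S₂ from S₁ and the other face lies on the opposite side of S₁ from S₂: there is ε ∈ {−,+} such that S₁ and the face I^{n,i,s}_{i,ε} lie in different connected components of I^{n,i,s} \ S₂, and S₂ and the face I^{n,i,s}_{i,ε*} lie in different connected components of I^{n,i,s} \ S₁. -/

import Mathlib

def unitCube (n : ℕ) : Set (Fin n → ℝ) := Set.Icc 0 1

def face (n : ℕ) (i : Fin n) (v : ℝ) : Set (Fin n → ℝ) := {x ∈ unitCube n | x i = v}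

/-- `A` connects the `i`-th opposite faces of the unit cube: some connected subset of `A`
meets both faces. -/
def Connects (n : ℕ) (i : Fin n) (A : Set (Fin n → ℝ)) : Prop :=
  ∃ S ⊆ A, IsPreconnected S ∧ (S ∩ face n i 0).Nonempty ∧ (S ∩ face n i 1).Nonempty

/-- `A` separates the `i`-th opposite faces of the unit cube. -/
def Separates (n : ℕ) (i : Fin n) (A : Set (Fin n → ℝ)) : Prop :=
  ¬ Connects n i (unitCube n \ A)

/-- `U` is open in the subspace topology of the unit cube. -/
def OpenInCube (n : ℕ) (U : Set (Fin n → ℝ)) : Prop :=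
  ∃ V : Set (Fin n → ℝ), IsOpen V ∧ U = V ∩ unitCube n

/-- The unit cube extended by `s` in the `i`-th direction. -/
def extCube (n : ℕ) (i : Fin n) (s : ℝ) : Set (Fin n → ℝ) :=
  Set.Icc (fun k => if k = i then -s else 0) (fun k => if k = i then 1 + s else 1)



open Set Metric

variable {E : Type*} [NormedAddCommGroup E] [NormedSpace ℝ E]

/-- Local path connectedness of a convex set (as a subspace). -/
theorem Convex.locPathConnectedSpace' {K : Set E} (hK : Convex ℝ K) :
    LocPathConnectedSpace K := by
  refine LocPathConnectedSpace.of_bases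
    (p := fun (x : K) (ε : ℝ) => 0 < ε)
    (s := fun (x : K) (ε : ℝ) => Subtype.val ⁻¹' Metric.ball (x : E) ε)
    (fun x => ?_) (fun x ε hε => ?_)
  · rw [nhds_induced]
    exact (Metric.nhds_basis_ball (x := (x : E))).comap _
  · rw [Topology.IsInducing.subtypeVal.isPathConnected_iff, Subtype.image_preimage_val]
    exact (hK.inter (convex_ball _ _)).isPathConnected
      ⟨x, x.2, Metric.mem_ball_self hε⟩

/-- A preconnected, relatively open subset of a convex set is path connected
(in the `JoinedIn` sense). -/
theorem joinedIn_of_relOpen {K U : Set E} (hK : Convex ℝ K) (hUK : U ⊆ K)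
    (hUpre : IsPreconnected U) {W : Set E} (hW : IsOpen W) (hUW : U = W ∩ K)
    {x y : E} (hx : x ∈ U) (hy : y ∈ U) : JoinedIn U x y := by
  haveI : LocallyPathConnectedSpace K := hK.locPathConnectedSpace'
  set V : Set K := Subtype.val ⁻¹' U with hV
  have hVW : V = Subtype.val ⁻¹' W := by
    ext z
    simp only [hV, Set.mem_preimage, hUW, Set.mem_inter_iff, z.2, and_true]
  have hVopen : IsOpen V := hVW ▸ hW.preimage continuous_subtype_val
  have himg : Subtype.val '' V = U := by
    rw [hV, Subtype.image_preimage_val, Set.inter_eq_right.mpr hUK]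
  have hVpre : IsPreconnected V := by
    rw [← Topology.IsInducing.subtypeVal.isPreconnected_image, himg]; exact hUpre
  have hVconn : IsConnected V := ⟨⟨⟨x, hUK hx⟩, hx⟩, hVpre⟩
  have hVpath : IsPathConnected V := (hVopen.isConnected_iff_isPathConnected).mp hVconn
  have hUpath : IsPathConnected U := by
    rw [← himg]; exact hVpath.image continuous_subtype_val
  exact hUpath.joinedIn x hx y hy

/-- Points of the closure of a component of `K \ A` that lie in `K \ A` are in the component,
together with a relative ball. -/
theorem comp_ball {K A : Set E} (hK : Convex ℝ K) (hA : IsOpen Aᶜ) {w : E}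
    (hw : w ∈ K \ A) {z : E}
    (hz : z ∈ closure (connectedComponentIn (K \ A) w)) (hzK : z ∈ K) (hzA : z ∉ A) :
    ∃ ε > 0, ball z ε ∩ K ⊆ connectedComponentIn (K \ A) w ∧
      z ∈ connectedComponentIn (K \ A) w := by
  set U := connectedComponentIn (K \ A) w with hU
  obtain ⟨ε, hε, hball⟩ := Metric.isOpen_iff.mp hA z hzA
  have hN : Convex ℝ (ball z ε ∩ K) := (convex_ball _ _).inter hK
  have hNsub : ball z ε ∩ K ⊆ K \ A := fun p hp => ⟨hp.2, hball hp.1⟩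
  obtain ⟨p, hpU, hpd⟩ := Metric.mem_closure_iff.mp hz ε hε
  have hpN : p ∈ ball z ε ∩ K := by
    refine ⟨?_, (connectedComponentIn_subset _ _ hpU).1⟩
    rw [mem_ball, dist_comm]; exact hpd
  have hMpre : IsPreconnected ((ball z ε ∩ K) ∪ U) :=
    IsPreconnected.union p hpN hpU hN.isPreconnected isPreconnected_connectedComponentIn
  have hMsub : (ball z ε ∩ K) ∪ U ⊆ K \ A :=
    Set.union_subset hNsub (connectedComponentIn_subset _ _)
  have hwM : w ∈ (ball z ε ∩ K) ∪ U := Or.inr (mem_connectedComponentIn hw)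
  have hMU : (ball z ε ∩ K) ∪ U ⊆ U :=
    hMpre.subset_connectedComponentIn hwM hMsub
  exact ⟨ε, hε, fun p hp => hMU (Or.inl hp),
    hMU (Or.inl ⟨mem_ball_self hε, hzK⟩)⟩

/-- The component of `K \ A` is relatively open in `K`. -/
theorem comp_relOpen {K A : Set E} (hK : Convex ℝ K) (hA : IsOpen Aᶜ) {w : E}
    (hw : w ∈ K \ A) :
    ∃ W : Set E, IsOpen W ∧ connectedComponentIn (K \ A) w = W ∩ K := by
  set U := connectedComponentIn (K \ A) w with hU
  refine ⟨{p | ∃ ε > 0, ball p ε ∩ K ⊆ U}, ?_, ?_⟩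
  · rw [Metric.isOpen_iff]
    rintro p ⟨ε, hε, hp⟩
    refine ⟨ε / 2, by positivity, fun q hq => ⟨ε / 2, by positivity, fun r hr => hp ⟨?_, hr.2⟩⟩⟩
    have h3 : dist r p ≤ dist r q + dist q p := dist_triangle _ _ _
    have h1 : dist r q < ε / 2 := hr.1
    have h2 : dist q p < ε / 2 := hq
    rw [mem_ball]
    linarith
  · apply Set.Subset.antisymm
    · intro z hz
      have hzKA := connectedComponentIn_subset _ _ hz
      obtain ⟨ε, hε, hsub, _⟩ := comp_ball hK hA hw (subset_closure hz) hzKA.1 hzKA.2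
      exact ⟨⟨ε, hε, hsub⟩, hzKA.1⟩
    · rintro p ⟨⟨ε, hε, hsub⟩, hpK⟩
      exact hsub ⟨mem_ball_self hε, hpK⟩

/-- Relative closure of a component adds only points of `A`. -/
theorem closure_comp_subset {K A : Set E} (hK : Convex ℝ K) (hKc : IsClosed K)
    (hA : IsOpen Aᶜ) {w : E} (hw : w ∈ K \ A) :
    closure (connectedComponentIn (K \ A) w) ⊆ connectedComponentIn (K \ A) w ∪ A := by
  intro z hz
  have hzK : z ∈ K := by
    have : closure (connectedComponentIn (K \ A) w) ⊆ K :=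
      closure_minimal ((connectedComponentIn_subset _ _).trans Set.diff_subset) hKc
    exact this hz
  by_cases hzA : z ∈ A
  · exact Or.inr hzA
  · exact Or.inl (comp_ball hK hA hw hz hzK hzA).choose_spec.2.2

/-- The closure of a component of `K \ A` meets `A` (when `K` is a closed preconnected
convex set and `A` is a nonempty closed subset). -/
theorem closure_comp_meets {K A : Set E} (hK : Convex ℝ K) (hKc : IsClosed K)
    (hA : IsClosed A) (hAK : A ⊆ K) (hAne : A.Nonempty) {w : E} (hw : w ∈ K \ A) :
    (closure (connectedComponentIn (K \ A) w) ∩ A).Nonempty := by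
  by_contra hcon
  rw [Set.not_nonempty_iff_eq_empty] at hcon
  set U := connectedComponentIn (K \ A) w with hUdef
  have hUsub : U ⊆ K \ A := connectedComponentIn_subset _ _
  have hclK : closure U ⊆ K := closure_minimal (hUsub.trans Set.diff_subset) hKc
  have hclU : closure U ⊆ U := by
    intro z hz
    have hzA : z ∉ A := fun h => Set.eq_empty_iff_forall_notMem.mp hcon z ⟨hz, h⟩
    exact (comp_ball hK hA.isOpen_compl hw hz (hclK hz) hzA).choose_spec.2.2
  have hUclosed : IsClosed U := isClosed_of_closure_subset hclU
  have hWclosed : IsClosed (K \ U) := by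
    refine isClosed_of_closure_subset fun z hz => ?_
    have hzK : z ∈ K := closure_minimal Set.diff_subset hKc hz
    refine ⟨hzK, fun hzU => ?_⟩
    obtain ⟨ε, hε, hsub, -⟩ := comp_ball hK hA.isOpen_compl hw (subset_closure hzU)
      (hUsub hzU).1 (hUsub hzU).2
    obtain ⟨p, hpW, hpd⟩ := Metric.mem_closure_iff.mp hz ε hε
    exact hpW.2 (hsub ⟨by rw [mem_ball, dist_comm]; exact hpd, hpW.1⟩)
  have hAW : A ⊆ K \ U := fun a ha => ⟨hAK ha, fun hu => (hUsub hu).2 ha⟩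
  obtain ⟨u, v, hu, hv, hUu, hWv, huv⟩ :=
    NormalSpace.normal U (K \ U) hUclosed hWclosed
      (Set.disjoint_left.mpr fun a haU haW => haW.2 haU)
  obtain ⟨a, haA⟩ := hAne
  have hKpre : IsPreconnected K := hK.isPreconnected
  obtain ⟨q, hqK, hqu, hqv⟩ := hKpre u v hu hv
    (fun p hp => by
      by_cases hpU : p ∈ U
      exacts [Or.inl (hUu hpU), Or.inr (hWv ⟨hp, hpU⟩)])
    ⟨w, (hw.1 : w ∈ K), hUu (mem_connectedComponentIn hw)⟩
    ⟨a, hAK haA, hWv (hAW haA)⟩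
  exact Set.disjoint_left.mp huv hqu hqv


namespace Stmt15

variable {n : ℕ}

/-- `T` contains a preconnected set meeting both `A` and `B`. -/
def Conn2 (T A B : Set (Fin n → ℝ)) : Prop :=
  ∃ C ⊆ T, IsPreconnected C ∧ (C ∩ A).Nonempty ∧ (C ∩ B).Nonempty

theorem Conn2.symm {T A B : Set (Fin n → ℝ)} (h : Conn2 T A B) : Conn2 T B A := by
  obtain ⟨C, h1, h2, h3, h4⟩ := h
  exact ⟨C, h1, h2, h4, h3⟩

theorem mem_extCube {i : Fin n} {s : ℝ} {x : Fin n → ℝ} :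
    x ∈ extCube n i s ↔ ∀ k, (if k = i then -s else 0) ≤ x k ∧
      x k ≤ (if k = i then 1 + s else 1) := by
  simp only [extCube, Set.mem_Icc, Pi.le_def, ← forall_and]

theorem unitCube_subset_extCube {i : Fin n} {s : ℝ} (hs : 0 ≤ s) :
    unitCube n ⊆ extCube n i s := by
  intro x hx
  obtain ⟨h0, h1⟩ := hx
  rw [mem_extCube]
  intro k
  have l := h0 k
  have u := h1 k
  simp only [Pi.zero_apply] at l
  simp only [Pi.one_apply] at u
  constructor <;> split <;> linarith

theorem extCube_convex {i : Fin n} {s : ℝ} : Convex ℝ (extCube n i s) := convex_Icc _ _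

theorem extCube_closed {i : Fin n} {s : ℝ} : IsClosed (extCube n i s) := isClosed_Icc

/-- The extended faces are nonempty. -/
theorem eface_nonempty {i : Fin n} {s v : ℝ} (hv : -s ≤ v) (hv' : v ≤ 1 + s) :
    {z ∈ extCube n i s | z i = v}.Nonempty := by
  refine ⟨fun k => if k = i then v else 0, ?_, by simp⟩
  rw [mem_extCube]
  intro k
  by_cases hk : k = i <;> simp [hk] <;> norm_num <;> exact ⟨hv, hv'⟩

theorem eface_subset {i : Fin n} {s v : ℝ} :
    {z ∈ extCube n i s | z i = v} ⊆ extCube n i s := fun _ h => h.1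

/-- Extended face points are not in the unit cube for `v ∉ [0,1]`. -/
theorem eface_disjoint_unitCube {i : Fin n} {s v : ℝ} (hv : v < 0 ∨ 1 < v)
    {S : Set (Fin n → ℝ)} (hS : S ⊆ unitCube n) :
    ∀ z ∈ {z ∈ extCube n i s | z i = v}, z ∉ S := by
  rintro z ⟨-, hzv⟩ hzS
  obtain ⟨h0, h1⟩ := hS hzS
  have l := h0 i
  have u := h1 i
  simp only [Pi.zero_apply] at l
  simp only [Pi.one_apply] at u
  rcases hv with h | h <;> rw [hzv] at l u <;> linarith

end Stmt15

namespace Stmt15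

variable {n : ℕ}

/-- Key separation-extension lemma: if `A ⊆ [0,1]^n` is closed and separates the `i`-th
opposite faces of the unit cube, then no preconnected subset of `extCube \ A` meets both
extended faces. -/
theorem lemA {i : Fin n} {s : ℝ} (hs : 0 < s) {A : Set (Fin n → ℝ)}
    (hA : IsClosed A) (hAu : A ⊆ unitCube n) (hsep : Separates n i A) :
    ¬ Conn2 (extCube n i s \ A) {z ∈ extCube n i s | z i = -s}
      {z ∈ extCube n i s | z i = 1 + s} := by
  rintro ⟨C, hCT, hCpre, ⟨x, hxC, hxF⟩, ⟨y, hyC, hyF⟩⟩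
  set K := extCube n i s with hKdef
  have hxKA : x ∈ K \ A := hCT hxC
  set U := connectedComponentIn (K \ A) x with hUdef
  have hCU : C ⊆ U := hCpre.subset_connectedComponentIn hxC hCT
  have hUsub : U ⊆ K \ A := connectedComponentIn_subset _ _
  obtain ⟨W, hW, hUW⟩ := comp_relOpen extCube_convex hA.isOpen_compl hxKA
  have hUpre : IsPreconnected U := isPreconnected_connectedComponentIn
  have hjoined : JoinedIn U x y :=
    joinedIn_of_relOpen extCube_convex (hUsub.trans Set.diff_subset) hUpre hW hUW
      (mem_connectedComponentIn hxKA) (hCU hyC)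
  obtain ⟨γ, hγ⟩ := hjoined
  set F : ℝ → (Fin n → ℝ) := fun t => γ (Set.projIcc 0 1 zero_le_one t) with hFdef
  have hFcont : Continuous F := γ.continuous.comp continuous_projIcc
  have hFU : ∀ t, F t ∈ U := fun t => hγ _
  set f : ℝ → ℝ := fun t => F t i with hfdef
  have hfcont : Continuous f := (continuous_apply i).comp hFcont
  have hF0 : F 0 = x := by
    simp only [hFdef, Set.projIcc_left]
    exact γ.source
  have hF1 : F 1 = y := by
    simp only [hFdef, Set.projIcc_right]
    exact γ.target
  have hf0 : f 0 = -s := by rw [hfdef]; simp only [hF0]; exact hxF.2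
  have hf1 : f 1 = 1 + s := by rw [hfdef]; simp only [hF1]; exact hyF.2
  -- first time `f` hits `1`
  set T1 := Set.Icc (0:ℝ) 1 ∩ f ⁻¹' {1} with hT1def
  have hT1closed : IsClosed T1 := isClosed_Icc.inter (isClosed_singleton.preimage hfcont)
  have hT1ne : T1.Nonempty := by
    have : (1:ℝ) ∈ f '' Set.Icc 0 1 := by
      apply intermediate_value_Icc zero_le_one hfcont.continuousOn
      rw [hf0, hf1]
      constructor <;> linarith
    obtain ⟨t, ht, hft⟩ := this
    exact ⟨t, ht, hft⟩
  have hT1bdd : BddBelow T1 := ⟨0, fun t ht => ht.1.1⟩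
  set t₁ := sInf T1 with ht₁def
  have ht₁mem : t₁ ∈ T1 := hT1closed.csInf_mem hT1ne hT1bdd
  have hft₁ : f t₁ = 1 := ht₁mem.2
  have ht₁0 : 0 ≤ t₁ := ht₁mem.1.1
  have ht₁1 : t₁ ≤ 1 := ht₁mem.1.2
  -- last time `f` hits `0` before `t₁`
  set T0 := Set.Icc (0:ℝ) t₁ ∩ f ⁻¹' {0} with hT0def
  have hT0closed : IsClosed T0 := isClosed_Icc.inter (isClosed_singleton.preimage hfcont)
  have hT0ne : T0.Nonempty := by
    have : (0:ℝ) ∈ f '' Set.Icc 0 t₁ := by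
      apply intermediate_value_Icc ht₁0 hfcont.continuousOn
      rw [hf0, hft₁]
      constructor <;> linarith
    obtain ⟨t, ht, hft⟩ := this
    exact ⟨t, ht, hft⟩
  have hT0bdd : BddAbove T0 := ⟨t₁, fun t ht => ht.1.2⟩
  set t₀ := sSup T0 with ht₀def
  have ht₀mem : t₀ ∈ T0 := hT0closed.csSup_mem hT0ne hT0bdd
  have hft₀ : f t₀ = 0 := ht₀mem.2
  have ht₀0 : 0 ≤ t₀ := ht₀mem.1.1
  have ht₀t₁ : t₀ ≤ t₁ := ht₀mem.1.2
  -- on `[t₀, t₁]` the value of `f` stays in `[0,1]`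
  have hbound : ∀ t ∈ Set.Icc t₀ t₁, 0 ≤ f t ∧ f t ≤ 1 := by
    rintro t ⟨htl, htu⟩
    constructor
    · by_contra hlt
      push_neg at hlt
      have : (0:ℝ) ∈ f '' Set.Icc t t₁ := by
        apply intermediate_value_Icc htu hfcont.continuousOn
        rw [hft₁]
        constructor <;> linarith
      obtain ⟨u, ⟨hul, huu⟩, hfu⟩ := this
      have huT0 : u ∈ T0 := ⟨⟨le_trans ht₀0 (le_trans htl hul), huu⟩, hfu⟩
      have : u ≤ t₀ := le_csSup hT0bdd huT0
      have : f t = 0 := by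
        have : t = u := le_antisymm hul (le_trans this htl)
        rw [this, hfu]
      linarith
    · by_contra hgt
      push_neg at hgt
      have : (1:ℝ) ∈ f '' Set.Icc t₀ t := by
        apply intermediate_value_Icc htl hfcont.continuousOn
        rw [hft₀]
        constructor <;> linarith
      obtain ⟨u, ⟨hul, huu⟩, hfu⟩ := this
      have huT1 : u ∈ T1 := ⟨⟨le_trans ht₀0 hul, le_trans huu (le_trans htu ht₁1)⟩, hfu⟩
      have h1u : t₁ ≤ u := csInf_le hT1bdd huT1
      have : f t = 1 := by
        have : t = u := le_antisymm (htu.trans h1u) huu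
        rw [this, hfu]
      linarith
  -- build a connected subset of the unit cube joining the unit faces
  set D := F '' Set.Icc t₀ t₁ with hDdef
  have hDpre : IsPreconnected D := isPreconnected_Icc.image F hFcont.continuousOn
  have hDsub : D ⊆ unitCube n \ A := by
    rintro z ⟨t, ht, rfl⟩
    have hFt : F t ∈ K \ A := hUsub (hFU t)
    refine ⟨?_, hFt.2⟩
    have hKm := mem_extCube.mp hFt.1
    constructor <;> intro k
    · by_cases hk : k = i
      · subst hk
        exact (hbound t ht).1
      · have := (hKm k).1
        simpa [hk] using this
    · by_cases hk : k = i
      · subst hk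
        exact (hbound t ht).2
      · have := (hKm k).2
        simpa [hk] using this
  apply hsep
  refine ⟨D, fun z hz => ⟨(hDsub hz).1, (hDsub hz).2⟩, hDpre, ⟨F t₀, ?_, ?_⟩, ⟨F t₁, ?_, ?_⟩⟩
  · exact Set.mem_image_of_mem F ⟨le_refl _, ht₀t₁⟩
  · exact ⟨(hDsub (Set.mem_image_of_mem F ⟨le_refl _, ht₀t₁⟩)).1, hft₀⟩
  · exact Set.mem_image_of_mem F ⟨ht₀t₁, le_refl _⟩
  · exact ⟨(hDsub (Set.mem_image_of_mem F ⟨ht₀t₁, le_refl _⟩)).1, hft₁⟩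

end Stmt15

namespace Stmt15

variable {n : ℕ}

/-- Merging: if a preconnected `S ⊆ K \ S'` is joined (within `K \ S'`) to both `F` and `G`,
then `F` and `G` are joined within `K \ S'`. -/
theorem merge {K S S' F G : Set (Fin n → ℝ)} (hSpre : IsPreconnected S)
    (hSsub : S ⊆ K \ S') (hF : Conn2 (K \ S') S F) (hG : Conn2 (K \ S') S G) :
    Conn2 (K \ S') F G := by
  obtain ⟨C₁, hC₁T, hC₁pre, ⟨p, hpC, hpS⟩, ⟨r, hrC, hrF⟩⟩ := hF
  obtain ⟨C₂, hC₂T, hC₂pre, ⟨q, hqC, hqS⟩, ⟨r', hr'C, hr'G⟩⟩ := hG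
  have hSC₂ : IsPreconnected (S ∪ C₂) := IsPreconnected.union q hqS hqC hSpre hC₂pre
  have hD : IsPreconnected (C₁ ∪ (S ∪ C₂)) :=
    IsPreconnected.union p hpC (Or.inl hpS) hC₁pre hSC₂
  exact ⟨C₁ ∪ (S ∪ C₂), Set.union_subset hC₁T (Set.union_subset hSsub hC₂T), hD,
    ⟨r, Or.inl hrC, hrF⟩, ⟨r', Or.inr (Or.inr hr'C), hr'G⟩⟩

/-- The key lemma: `S` and `T` cannot both be joined to the same extended face within the
complement of the other. -/
theorem key {K S T F G : Set (Fin n → ℝ)} (hKconv : Convex ℝ K) (hKclosed : IsClosed K)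
    (hSK : S ⊆ K) (hTK : T ⊆ K)
    (hSpre : IsPreconnected S) (hTpre : IsPreconnected T)
    (hTclosed : IsClosed T) (hTne : T.Nonempty)
    (hST : Disjoint S T)
    (hGK : G ⊆ K) (hGS : ∀ z ∈ G, z ∉ S) (hGT : ∀ z ∈ G, z ∉ T) (hGne : G.Nonempty)
    (hET : ¬ Conn2 (K \ T) F G) (hES : ¬ Conn2 (K \ S) F G)
    (h1 : Conn2 (K \ T) S F) (h2 : Conn2 (K \ S) T F) : False := by
  obtain ⟨y, hyG⟩ := hGne
  have hyKT : y ∈ K \ T := ⟨hGK hyG, hGT y hyG⟩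
  set U := connectedComponentIn (K \ T) y with hUdef
  have hUsub : U ⊆ K \ T := connectedComponentIn_subset _ _
  -- `U` misses `S`
  have hUS : ∀ z ∈ U, z ∉ S := by
    intro z hzU hzS
    have hSsub : S ⊆ K \ T := fun p hp => ⟨hSK hp, fun hpT => hST.ne_of_mem hp hpT rfl⟩
    have hSU : S ⊆ U := by
      rw [hUdef, connectedComponentIn_eq hzU]
      exact hSpre.subset_connectedComponentIn hzS hSsub
    obtain ⟨C₁, hC₁T, hC₁pre, ⟨p, hpC, hpS⟩, ⟨r, hrC, hrF⟩⟩ := h1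
    have hM : IsPreconnected (C₁ ∪ U) :=
      IsPreconnected.union p hpC (hSU hpS) hC₁pre isPreconnected_connectedComponentIn
    exact hET ⟨C₁ ∪ U, Set.union_subset hC₁T hUsub, hM, ⟨r, Or.inl hrC, hrF⟩,
      ⟨y, Or.inr (mem_connectedComponentIn hyKT), hyG⟩⟩
  -- the closure of `U` meets `T` and stays in `U ∪ T`
  have hclsub : closure U ⊆ U ∪ T :=
    closure_comp_subset hKconv hKclosed hTclosed.isOpen_compl hyKT
  have hclmeet : (closure U ∩ T).Nonempty :=
    closure_comp_meets hKconv hKclosed hTclosed hTK hTne hyKT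
  have hclpre : IsPreconnected (closure U) := isPreconnected_connectedComponentIn.closure
  obtain ⟨a, haCl, haT⟩ := hclmeet
  obtain ⟨C₂, hC₂T, hC₂pre, ⟨p₂, hp₂C, hp₂T⟩, ⟨r₂, hr₂C, hr₂F⟩⟩ := h2
  have hTcl : IsPreconnected (T ∪ closure U) :=
    IsPreconnected.union a haT haCl hTpre hclpre
  have hD : IsPreconnected (C₂ ∪ (T ∪ closure U)) :=
    IsPreconnected.union p₂ hp₂C (Or.inl hp₂T) hC₂pre hTcl
  have hDsub : C₂ ∪ (T ∪ closure U) ⊆ K \ S := by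
    refine Set.union_subset hC₂T (Set.union_subset ?_ ?_)
    · exact fun p hp => ⟨hTK hp, fun hpS => hST.ne_of_mem hpS hp rfl⟩
    · intro p hp
      rcases hclsub hp with hpU | hpT
      · exact ⟨(hUsub hpU).1, hUS p hpU⟩
      · exact ⟨hTK hpT, fun hpS => hST.ne_of_mem hpS hpT rfl⟩
  exact hES ⟨C₂ ∪ (T ∪ closure U), hDsub, hD, ⟨r₂, Or.inl hr₂C, hr₂F⟩,
    ⟨y, Or.inr (Or.inr (subset_closure (mem_connectedComponentIn hyKT))), hyG⟩⟩

end Stmt15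

namespace Stmt15

variable {n : ℕ}

theorem toNe {K S' S F : Set (Fin n → ℝ)} (h : ¬ Conn2 (K \ S') S F)
    {x y : Fin n → ℝ} (hxS : x ∈ S) (hx : x ∈ K \ S') (hyF : y ∈ F) (hy : y ∈ K \ S') :
    connectedComponentIn (K \ S') x ≠ connectedComponentIn (K \ S') y := by
  intro heq
  refine h ⟨connectedComponentIn (K \ S') x, connectedComponentIn_subset _ _,
    isPreconnected_connectedComponentIn, ⟨x, mem_connectedComponentIn hx, hxS⟩,
    ⟨y, ?_, hyF⟩⟩
  rw [heq]
  exact mem_connectedComponentIn hy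

end Stmt15


theorem stmt15 {n : ℕ} (i : Fin n) (s : ℝ) (hs : 0 < s) (S₁ S₂ : Set (Fin n → ℝ))
    (h₁ : S₁ ⊆ unitCube n) (h₂ : S₂ ⊆ unitCube n)
    (hc₁ : IsCompact S₁) (hc₂ : IsCompact S₂)
    (hconn₁ : IsConnected S₁) (hconn₂ : IsConnected S₂) (hdisj : Disjoint S₁ S₂)
    (hsep₁ : Separates n i S₁) (hsep₂ : Separates n i S₂) :
    ∃ ε : Bool,
      (∀ x ∈ S₁, ∀ y ∈ {z ∈ extCube n i s | z i = if ε then 1 + s else -s},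
          connectedComponentIn (extCube n i s \ S₂) x ≠
            connectedComponentIn (extCube n i s \ S₂) y) ∧
      (∀ x ∈ S₂, ∀ y ∈ {z ∈ extCube n i s | z i = if ε then -s else 1 + s},
          connectedComponentIn (extCube n i s \ S₁) x ≠
            connectedComponentIn (extCube n i s \ S₁) y) := by
  classical
  open Stmt15 in
  set K := extCube n i s with hKdef
  set Fm : Set (Fin n → ℝ) := {z ∈ K | z i = -s} with hFm
  set Fp : Set (Fin n → ℝ) := {z ∈ K | z i = 1 + s} with hFp
  have hS1K : S₁ ⊆ K := h₁.trans (unitCube_subset_extCube hs.le)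
  have hS2K : S₂ ⊆ K := h₂.trans (unitCube_subset_extCube hs.le)
  have hFmS1 : ∀ z ∈ Fm, z ∉ S₁ :=
    eface_disjoint_unitCube (Or.inl (by linarith)) h₁
  have hFmS2 : ∀ z ∈ Fm, z ∉ S₂ :=
    eface_disjoint_unitCube (Or.inl (by linarith)) h₂
  have hFpS1 : ∀ z ∈ Fp, z ∉ S₁ :=
    eface_disjoint_unitCube (Or.inr (by linarith)) h₁
  have hFpS2 : ∀ z ∈ Fp, z ∉ S₂ :=
    eface_disjoint_unitCube (Or.inr (by linarith)) h₂
  have hFmne : Fm.Nonempty := eface_nonempty (le_refl _) (by linarith)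
  have hFpne : Fp.Nonempty := eface_nonempty (by linarith) (le_refl _)
  have E1 : ¬ Conn2 (K \ S₁) Fm Fp := lemA hs hc₁.isClosed h₁ hsep₁
  have E2 : ¬ Conn2 (K \ S₂) Fm Fp := lemA hs hc₂.isClosed h₂ hsep₂
  -- membership facts used in the final reduction
  have hmem1 : ∀ x ∈ S₁, x ∈ K \ S₂ :=
    fun x hx => ⟨hS1K hx, fun hx2 => hdisj.ne_of_mem hx hx2 rfl⟩
  have hmem2 : ∀ x ∈ S₂, x ∈ K \ S₁ :=
    fun x hx => ⟨hS2K hx, fun hx1 => hdisj.ne_of_mem hx1 hx rfl⟩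
  have hmemFm2 : ∀ y ∈ Fm, y ∈ K \ S₂ := fun y hy => ⟨hy.1, hFmS2 y hy⟩
  have hmemFm1 : ∀ y ∈ Fm, y ∈ K \ S₁ := fun y hy => ⟨hy.1, hFmS1 y hy⟩
  have hmemFp2 : ∀ y ∈ Fp, y ∈ K \ S₂ := fun y hy => ⟨hy.1, hFpS2 y hy⟩
  have hmemFp1 : ∀ y ∈ Fp, y ∈ K \ S₁ := fun y hy => ⟨hy.1, hFpS1 y hy⟩
  have hS1sub2 : S₁ ⊆ K \ S₂ := fun x hx => hmem1 x hx
  have hS2sub1 : S₂ ⊆ K \ S₁ := fun x hx => hmem2 x hx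
  by_cases c1 : Conn2 (K \ S₂) S₁ Fm
  · -- `S₁` reaches the bottom face: take `ε = true`
    refine ⟨true, ?_, ?_⟩
    · intro x hx y hy
      simp only [if_true] at hy
      have hnc : ¬ Conn2 (K \ S₂) S₁ Fp := fun c =>
        E2 (merge hconn₁.isPreconnected hS1sub2 c1 c)
      exact toNe hnc hx (hmem1 x hx) hy (hmemFp2 y hy)
    · intro x hx y hy
      simp only [if_true] at hy
      have hnc : ¬ Conn2 (K \ S₁) S₂ Fm := fun c =>
        key extCube_convex extCube_closed hS1K hS2K hconn₁.isPreconnected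
          hconn₂.isPreconnected hc₂.isClosed hconn₂.nonempty hdisj
          (fun z hz => hz.1) hFpS1 hFpS2 hFpne E2 E1 c1 c
      exact toNe hnc hx (hmem2 x hx) hy (hmemFm1 y hy)
  · by_cases c2 : Conn2 (K \ S₁) S₂ Fp
    · -- `S₂` reaches the top face: take `ε = true`
      refine ⟨true, ?_, ?_⟩
      · intro x hx y hy
        simp only [if_true] at hy
        have hnc : ¬ Conn2 (K \ S₂) S₁ Fp := fun c =>
          key extCube_convex extCube_closed hS1K hS2K hconn₁.isPreconnected
            hconn₂.isPreconnected hc₂.isClosed hconn₂.nonempty hdisj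
            (fun z hz => hz.1) hFmS1 hFmS2 hFmne (fun h => E2 h.symm)
            (fun h => E1 h.symm) c c2
        exact toNe hnc hx (hmem1 x hx) hy (hmemFp2 y hy)
      · intro x hx y hy
        simp only [if_true] at hy
        have hnc : ¬ Conn2 (K \ S₁) S₂ Fm := fun c =>
          E1 (merge hconn₂.isPreconnected hS2sub1 c c2)
        exact toNe hnc hx (hmem2 x hx) hy (hmemFm1 y hy)
    · -- neither: take `ε = false`
      refine ⟨false, ?_, ?_⟩
      · intro x hx y hy
        rw [if_neg (by simp)] at hy
        exact toNe c1 hx (hmem1 x hx) hy (hmemFm2 y hy)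
      · intro x hx y hy
        rw [if_neg (by simp)] at hy
        exact toNe c2 hx (hmem2 x hx) hy (hmemFp1 y hy)
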